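/- Let Γ be a finite simple connected graph that is not complete. Then there exists a vertex v of Γ that is essential (i.e., its closed star N(v) is not properly contained in the closed star of any other vertex) and such that the closed star N(v) is not a complete graph. -/
import Mathlib

lemma aux_triple {V : Type*} (G : SimpleGraph V) :
    ∀ n (a b : V), a ≠ b → ¬ G.Adj a b → ∀ p : G.Walk a b, p.length ≤ n →
    ∃ x y z : V, G.Adj x y ∧ G.Adj y z ∧ x ≠ z ∧ ¬ G.Adj x z := by
  intro n
  induction n with
  | zero =>
    intro a b hne hna p hp
    cases p with
    | nil => exact absurd rfl hne
    | cons h q => simp at hp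
  | succ n ih =>
    intro a b hne hna p hp
    cases p with
    | nil => exact absurd rfl hne
    | @cons _ c _ h q =>
      cases q with
      | nil => exact absurd h hna
      | @cons _ d _ h' q' =>
        by_cases had : a = d
        · subst had
          exact ih a b hne hna q' (by simp at hp; omega)
        · by_cases hadj : G.Adj a d
          · exact ih a b hne hna (SimpleGraph.Walk.cons hadj q') (by simp [SimpleGraph.Walk.length_cons] at hp ⊢; omega)
          · exact ⟨a, c, d, h, h', had, hadj⟩

/-- In a finite simple connected graph that is not complete, there is an essential
vertex whose closed star is not complete. -/
theorem exists_essential_vertex_with_noncomplete_star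
    {V : Type*} [Fintype V] (G : SimpleGraph V) (hconn : G.Connected)
    (hnc : ¬ ∀ u v : V, u ≠ v → G.Adj u v) :
    ∃ v : V,
      (¬ ∃ w : V, w ≠ v ∧ insert v (G.neighborSet v) ⊂ insert w (G.neighborSet w)) ∧
      ¬ (∀ u w : V, u ∈ insert v (G.neighborSet v) → w ∈ insert v (G.neighborSet v) →
          u ≠ w → G.Adj u w) := by
  push_neg at hnc
  obtain ⟨a, b, hab, hna⟩ := hnc
  obtain ⟨p⟩ := hconn a b
  obtain ⟨x, y, z, hxy, hyz, hxz, hnxz⟩ := aux_triple G p.length a b hab hna p le_rfl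
  set S : Set V := {v | ∃ u w : V, u ∈ insert v (G.neighborSet v) ∧
      w ∈ insert v (G.neighborSet v) ∧ u ≠ w ∧ ¬ G.Adj u w} with hS
  have hyS : y ∈ S := ⟨x, z, Or.inr hxy.symm, Or.inr hyz, hxz, hnxz⟩
  have hfin : S.Finite := Set.toFinite S
  obtain ⟨v, hvS, hmax⟩ := Set.exists_max_image S
    (fun v => (insert v (G.neighborSet v)).ncard) hfin ⟨y, hyS⟩
  refine ⟨v, ?_, ?_⟩
  · rintro ⟨w, hwv, hsub⟩
    obtain ⟨u1, u2, hu1, hu2, hne, hnadj⟩ := hvS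
    have hwS : w ∈ S := ⟨u1, u2, hsub.1 hu1, hsub.1 hu2, hne, hnadj⟩
    have := Set.ncard_lt_ncard hsub (Set.toFinite _)
    exact absurd (hmax w hwS) (by omega)
  · intro h
    obtain ⟨u1, u2, hu1, hu2, hne, hnadj⟩ := hvS
    exact hnadj (h u1 u2 hu1 hu2 hne)
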